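/- arXiv:1712.01885 — 6 statements merged into one kernel-verified Lean document; each statement's English description precedes it below -/
import Mathlib

section
/- Suppose in addition that M is compact. Then for every point σ of M the set B(σ) is chain-stable: for every open set V of M with B(σ) ⊆ V there exists ε > 0 such that for every τ > 0, every (ε,τ)-trajectory connecting two points of B(σ) is contained in V; that is, whenever P, Q ∈ B(σ) and P₁,…,P_k, t₁,…,t_k witness that Q is (ε,τ)-chain-accessible from P, then Pᵢ ∈ V for every 1 ≤ i ≤ k. -/
open Filter Topology

variable {M : Type*} [MetricSpace M]

/-- `Q` is `(ε,τ)`-chain-accessible from `P`: there are points `P₁,…,P_{k+1}` and times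
`t₁,…,t_{k+1}`, each `> τ`, with `dist P P₁ < ε`, `dist (φ tᵢ Pᵢ) P_{i+1} < ε` and
`dist (φ t_{k+1} P_{k+1}) Q < ε`. -/
def ChainAccessibleWithin (φ : ℝ → M → M) (ε τ : ℝ) (P Q : M) : Prop :=
  ∃ (k : ℕ) (Ps : Fin (k + 1) → M) (ts : Fin (k + 1) → ℝ),
    (∀ i, τ < ts i) ∧
    dist P (Ps 0) < ε ∧
    (∀ i : Fin k, dist (φ (ts i.castSucc) (Ps i.castSucc)) (Ps i.succ) < ε) ∧
    dist (φ (ts (Fin.last k)) (Ps (Fin.last k))) Q < ε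

/-- `Q` is chain-accessible from `P`. -/
def ChainAccessible (φ : ℝ → M → M) (P Q : M) : Prop :=
  ∀ ε > 0, ∃ τ > 0, ChainAccessibleWithin φ ε τ P Q

/-- `B(σ)`: the set of points chain-accessible from `σ`. -/
def chainBasin (φ : ℝ → M → M) (σ : M) : Set M :=
  {P | ChainAccessible φ σ P}

theorem cawMono {φ : ℝ → M → M} {ε ε' τ τ' : ℝ} {P Q : M}
    (h : ChainAccessibleWithin φ ε τ P Q) (hε : ε ≤ ε') (hτ : τ' ≤ τ) :
    ChainAccessibleWithin φ ε' τ' P Q := by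
  obtain ⟨k, Ps, ts, h1, h2, h3, h4⟩ := h
  exact ⟨k, Ps, ts, fun i => lt_of_le_of_lt hτ (h1 i), lt_of_lt_of_le h2 hε,
    fun i => lt_of_lt_of_le (h3 i) hε, lt_of_lt_of_le h4 hε⟩

theorem cawRetarget {φ : ℝ → M → M} {ε δ τ : ℝ} {P Q Q' : M}
    (h : ChainAccessibleWithin φ ε τ P Q) (hd : dist Q Q' < δ) :
    ChainAccessibleWithin φ (ε + δ) τ P Q' := by
  obtain ⟨k, Ps, ts, h1, h2, h3, h4⟩ := h
  have hδ : 0 < δ := lt_of_le_of_lt dist_nonneg hd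
  refine ⟨k, Ps, ts, h1, by linarith, fun i => by have := h3 i; linarith, ?_⟩
  have := dist_triangle (φ (ts (Fin.last k)) (Ps (Fin.last k))) Q Q'
  linarith

theorem cawStep {φ : ℝ → M → M} {ε τ t : ℝ} {P Q R : M}
    (h : ChainAccessibleWithin φ ε τ P Q) (ht : τ < t) (hd : dist (φ t Q) R < ε) :
    ChainAccessibleWithin φ ε τ P R := by
  obtain ⟨k, Ps, ts, h1, h2, h3, h4⟩ := h
  refine ⟨k + 1, Fin.snoc Ps Q, Fin.snoc ts t, ?_, ?_, ?_, ?_⟩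
  · intro i
    induction i using Fin.lastCases with
    | last => simpa using ht
    | cast j => simpa using h1 j
  · have h0 : (0 : Fin (k + 2)) = Fin.castSucc 0 := rfl
    rw [h0, Fin.snoc_castSucc]
    exact lt_of_lt_of_le h2 le_rfl
  · intro i
    induction i using Fin.lastCases with
    | last =>
      have hs : (Fin.last k).succ = Fin.last (k + 1) := Fin.succ_last k
      rw [hs, Fin.snoc_last, Fin.snoc_castSucc, Fin.snoc_castSucc]
      exact h4
    | cast j =>
      have hs : (Fin.castSucc j).succ = Fin.castSucc j.succ := Fin.succ_castSucc j
      rw [hs, Fin.snoc_castSucc, Fin.snoc_castSucc, Fin.snoc_castSucc]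
      exact h3 j
  · rw [Fin.snoc_last, Fin.snoc_last]
    exact hd

/-- if `M` is compact then `B(σ)` is chain-stable. -/
theorem chainBasin_chainStable [CompactSpace M] (φ : ℝ → M → M)
    (hcont : Continuous fun p : ℝ × M => φ p.1 p.2)
    (hφ0 : ∀ x, φ 0 x = x)
    (hφadd : ∀ s t x, φ (s + t) x = φ s (φ t x))
    (σ : M) :
    ∀ V : Set M, IsOpen V → chainBasin φ σ ⊆ V →
      ∃ ε > 0, ∀ τ > 0, ∀ P ∈ chainBasin φ σ, ∀ Q ∈ chainBasin φ σ,
        ∀ (k : ℕ) (Ps : Fin (k + 1) → M) (ts : Fin (k + 1) → ℝ),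
          (∀ i, τ < ts i) →
          dist P (Ps 0) < ε →
          (∀ i : Fin k, dist (φ (ts i.castSucc) (Ps i.castSucc)) (Ps i.succ) < ε) →
          dist (φ (ts (Fin.last k)) (Ps (Fin.last k))) Q < ε →
          ∀ i, Ps i ∈ V := by
  intro V hV hBV
  by_contra hcon
  push_neg at hcon
  have hbad : ∀ n : ℕ, ∃ τ > 0, ∃ P ∈ chainBasin φ σ, ∃ Q ∈ chainBasin φ σ,
      ∃ (k : ℕ) (Ps : Fin (k + 1) → M) (ts : Fin (k + 1) → ℝ),
        (∀ i, τ < ts i) ∧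
        dist P (Ps 0) < 1 / (n + 1) ∧
        (∀ i : Fin k, dist (φ (ts i.castSucc) (Ps i.castSucc)) (Ps i.succ) < 1 / (n + 1)) ∧
        dist (φ (ts (Fin.last k)) (Ps (Fin.last k))) Q < 1 / (n + 1) ∧
        ∃ i, Ps i ∉ V := by
    intro n
    obtain ⟨τ, hτ, P, hP, Q, hQ, k, Ps, ts, h1, h2, h3, h4, i, hi⟩ :=
      hcon (1 / (n + 1)) (by positivity)
    exact ⟨τ, hτ, P, hP, Q, hQ, k, Ps, ts, h1, h2, h3, h4, i, hi⟩
  choose τ hτ P hP Q hQ k Ps ts h1 h2 h3 h4 i hi using hbad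
  set b : ℕ → M := fun n => Ps n (i n) with hb
  have hbmem : ∀ n, b n ∈ Vᶜ := fun n => hi n
  have hcompact : IsCompact (Vᶜ : Set M) := hV.isClosed_compl.isCompact
  obtain ⟨x, hxV, ψ, hψ, hψt⟩ := hcompact.tendsto_subseq hbmem
  have hxB : x ∈ chainBasin φ σ := by
    intro δ hδ
    -- choose a good index n = ψ m
    obtain ⟨N1, hN1⟩ := Metric.tendsto_atTop.1 hψt (δ / 3) (by linarith)
    obtain ⟨N2, hN2⟩ := exists_nat_one_div_lt (show (0:ℝ) < δ / 3 by linarith)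
    set m := max N1 N2 with hm
    set n := ψ m with hn
    have hdist : dist (b n) x < δ / 3 := hN1 m (le_max_left _ _)
    have hsmall : 1 / (n + 1 : ℝ) < δ / 3 := by
      have hmn : N2 ≤ n := le_trans (le_max_right N1 N2) (hψ.le_apply)
      have : 1 / (n + 1 : ℝ) ≤ 1 / (N2 + 1 : ℝ) := by
        apply one_div_le_one_div_of_le (by positivity)
        have : (N2 : ℝ) ≤ n := Nat.cast_le.2 hmn
        linarith
      linarith
    -- chain from σ to P n with error δ/3
    obtain ⟨τσ, hτσ, hσchain⟩ := hP n (δ / 3) (by linarith)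
    set τ' := min τσ (τ n) with hτ'
    have hτ'pos : 0 < τ' := lt_min hτσ (hτ n)
    -- by induction: σ chain-accessible to every Ps n j within (δ/3 + 1/(n+1), τ')
    have hacc : ∀ j : Fin (k n + 1),
        ChainAccessibleWithin φ (δ / 3 + 1 / (n + 1)) τ' σ (Ps n j) := by
      intro j
      induction j using Fin.induction with
      | zero =>
        exact cawRetarget (cawMono hσchain le_rfl (min_le_left _ _)) (h2 n)
      | succ j ih =>
        refine cawStep (t := ts n j.castSucc) ih ?_ ?_
        · exact lt_of_le_of_lt (min_le_right _ _) (h1 n j.castSucc)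
        · have := h3 n j
          have h13 : (0:ℝ) < δ / 3 := by linarith
          linarith
    have hx : ChainAccessibleWithin φ (δ / 3 + 1 / (n + 1) + δ / 3) τ' σ x :=
      cawRetarget (hacc (i n)) hdist
    exact ⟨τ', hτ'pos, cawMono hx (by linarith) le_rfl⟩
  exact hxV (hBV hxB)
end

section
/- If a point P of M has a in its α-limit set (there is a sequence tₙ → +∞ with φ(−tₙ, P) → a) and b in its ω-limit set (there is a sequence sₙ → +∞ with φ(sₙ, P) → b), then b is chain-accessible from a. (This expresses that a heteroclinic trajectory from a to b makes b chain-accessible from a.) -/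
open Filter Topology

variable {M : Type*} [MetricSpace M]

/-- a heteroclinic trajectory from `a` to `b` makes `b`
chain-accessible from `a`. -/
theorem heteroclinic_chainAccessible (φ : ℝ → M → M)
    (hcont : Continuous fun p : ℝ × M => φ p.1 p.2)
    (hφ0 : ∀ x, φ 0 x = x)
    (hφadd : ∀ s t x, φ (s + t) x = φ s (φ t x))
    (a b P : M)
    (t : ℕ → ℝ) (ht : Tendsto t atTop atTop)
    (hta : Tendsto (fun n => φ (-(t n)) P) atTop (𝓝 a))
    (s : ℕ → ℝ) (hs : Tendsto s atTop atTop)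
    (hsb : Tendsto (fun n => φ (s n) P) atTop (𝓝 b)) :
    ChainAccessible φ a b := by
  intro ε hε
  refine ⟨1, one_pos, ?_⟩
  obtain ⟨n, hn1, hn2⟩ := ((ht.eventually_ge_atTop 1).and
    (hta.eventually (Metric.ball_mem_nhds a hε))).exists
  obtain ⟨m, hm1, hm2⟩ := ((hs.eventually_ge_atTop 1).and
    (hsb.eventually (Metric.ball_mem_nhds b hε))).exists
  refine ⟨0, fun _ => φ (-(t n)) P, fun _ => t n + s m, fun _ => by dsimp only; linarith, ?_, ?_, ?_⟩
  · simpa [dist_comm] using hn2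
  · exact fun i => i.elim0
  · have : φ (t n + s m) (φ (-(t n)) P) = φ (s m) P := by
      rw [add_comm, hφadd, ← hφadd (t n) (-(t n)), add_neg_cancel, hφ0]
    simpa [this] using hm2
end

section
/- Fixed points of the first-return map: (i) if (x,y) ∈ ℝ × (0,1) satisfies F_λ(x,y) = (x + 2πm, y) for some integer m, then m is a positive integer, y = exp(−2πm/K), and λ·sin x = y − y^δ; (ii) conversely, for every positive integer ℓ, setting y_ℓ = exp(−2πℓ/K), there exists x ∈ ℝ with F_λ(x, y_ℓ) = (x + 2πℓ, y_ℓ) if and only if λ ≥ y_ℓ − y_ℓ^δ (and here 0 < y_ℓ − y_ℓ^δ). -/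
/-- fixed points of the model first-return map. -/
theorem fixed_points_first_return (K δ lam : ℝ) (hK : 0 < K) (hδ : 1 < δ)
    (hlam : 0 < lam) :
    let F : ℝ × ℝ → ℝ × ℝ := fun p =>
      (p.1 - K * Real.log p.2, p.2 ^ δ + lam * Real.sin (p.1 - K * Real.log p.2))
    (∀ (x y : ℝ) (m : ℤ), 0 < y → y < 1 →
        F (x, y) = (x + 2 * Real.pi * m, y) →
        0 < m ∧ y = Real.exp (-(2 * Real.pi * m) / K) ∧
          lam * Real.sin x = y - y ^ δ) ∧
    (∀ ℓ : ℕ, 0 < ℓ →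
        let yl : ℝ := Real.exp (-(2 * Real.pi * ℓ) / K)
        0 < yl - yl ^ δ ∧
        ((∃ x : ℝ, F (x, yl) = (x + 2 * Real.pi * ℓ, yl)) ↔ yl - yl ^ δ ≤ lam)) := by
  intro F
  have hπ := Real.pi_pos
  constructor
  · intro x y m hy0 hy1 hfix
    have h1 : x - K * Real.log y = x + 2 * Real.pi * m := congrArg Prod.fst hfix
    have hlog : Real.log y = -(2 * Real.pi * m) / K := by
      field_simp
      nlinarith [h1]
    have hlogneg : Real.log y < 0 := Real.log_neg hy0 hy1
    have hm : (0:ℝ) < m := by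
      rw [hlog] at hlogneg
      rcases div_neg_iff.mp hlogneg with ⟨h, h'⟩ | ⟨h, h'⟩
      · linarith
      · nlinarith
    refine ⟨by exact_mod_cast hm, by rw [← Real.exp_log hy0, hlog], ?_⟩
    have h2 : y ^ δ + lam * Real.sin (x - K * Real.log y) = y := congrArg Prod.snd hfix
    rw [h1, show x + 2 * Real.pi * (m:ℝ) = x + (m:ℝ) * (2 * Real.pi) by ring,
      Real.sin_add_int_mul_two_pi] at h2
    linarith
  · intro ℓ hℓ yl
    have hℓ' : (0:ℝ) < ℓ := by exact_mod_cast hℓ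
    have hyl0 : 0 < yl := Real.exp_pos _
    have hyl1 : yl < 1 := by
      apply Real.exp_lt_one_iff.mpr
      apply div_neg_of_neg_of_pos _ hK
      nlinarith
    have hpow : yl ^ δ < yl := by
      have := Real.rpow_lt_rpow_of_exponent_gt hyl0 hyl1 hδ
      rwa [Real.rpow_one] at this
    have hlog : Real.log yl = -(2 * Real.pi * ℓ) / K := Real.log_exp _
    refine ⟨by linarith, ?_, ?_⟩
    · rintro ⟨x, hfix⟩
      have h2 : yl ^ δ + lam * Real.sin (x - K * Real.log yl) = yl :=
        congrArg Prod.snd hfix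
      have harg : x - K * Real.log yl = x + (ℓ:ℝ) * (2 * Real.pi) := by
        rw [hlog]; field_simp; ring
      rw [harg, Real.sin_add_nat_mul_two_pi] at h2
      nlinarith [Real.sin_le_one x]
    · intro hle
      refine ⟨Real.arcsin ((yl - yl ^ δ) / lam), ?_⟩
      have harg : Real.arcsin ((yl - yl ^ δ) / lam) - K * Real.log yl =
          Real.arcsin ((yl - yl ^ δ) / lam) + 2 * Real.pi * ℓ := by
        rw [hlog]; field_simp; ring
      have hsin : Real.sin (Real.arcsin ((yl - yl ^ δ) / lam) + 2 * Real.pi * ℓ)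
          = (yl - yl ^ δ) / lam := by
        rw [show Real.arcsin ((yl - yl ^ δ) / lam) + 2 * Real.pi * (ℓ:ℝ) =
          Real.arcsin ((yl - yl ^ δ) / lam) + (ℓ:ℝ) * (2 * Real.pi) by ring,
          Real.sin_add_nat_mul_two_pi]
        apply Real.sin_arcsin
        · have : 0 ≤ (yl - yl ^ δ) / lam := div_nonneg (by linarith) hlam.le
          linarith
        · exact (div_le_one hlam).mpr hle
      show (_, _) = (_, _)
      rw [harg]
      refine Prod.ext rfl ?_
      simp only [hsin]
      field_simp
      ring
end

section
/- There exists L ∈ ℕ such that for every ℓ ≥ L: λ > y_ℓ − y_ℓ^δ, t_ℓ² − 4d_ℓ > 0, and the numbers μ_s(ℓ) and μ_u(ℓ) are the two (real, distinct) eigenvalues of the 2×2 real matrix M_ℓ = [[1, −K/y_ℓ], [λ·c_ℓ, δ·y_ℓ^{δ−1} − (λK/y_ℓ)·c_ℓ]], where c_ℓ = √(1 − ((y_ℓ − y_ℓ^δ)/λ)²); moreover μ_u(ℓ) < μ_s(ℓ) < 0, with μ_s(ℓ) + μ_u(ℓ) = t_ℓ and μ_s(ℓ)·μ_u(ℓ)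 = d_ℓ. In addition, μ_s(ℓ) → 0 and μ_u(ℓ) → −∞ as ℓ → ∞. -/
open Filter Topology Matrix

/-- `y_ℓ = exp(−2πℓ/K)`, the `y`-coordinate of the fixed point `p_ℓ`. -/
noncomputable def yFix (K : ℝ) (ℓ : ℕ) : ℝ :=
  Real.exp (-(2 * Real.pi * (ℓ : ℝ)) / K)

/-- `d_ℓ = δ·exp(−2π(δ−1)ℓ/K)`, the determinant of the derivative at `p_ℓ`. -/
noncomputable def detFix (K δ : ℝ) (ℓ : ℕ) : ℝ :=
  δ * Real.exp (-(2 * Real.pi * (δ - 1) * (ℓ : ℝ)) / K)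

/-- `t_ℓ`, the trace of the derivative at `p_ℓ`. -/
noncomputable def traceFix (K δ lam : ℝ) (ℓ : ℕ) : ℝ :=
  1 + δ * Real.exp (-(2 * Real.pi * (δ - 1) * (ℓ : ℝ)) / K)
    - K * Real.exp (2 * Real.pi * (ℓ : ℝ) / K) *
      Real.sqrt (lam ^ 2 - (yFix K ℓ - yFix K ℓ ^ δ) ^ 2)

/-- `μ_s(ℓ)`, the stable eigenvalue at `p_ℓ`. -/
noncomputable def muS (K δ lam : ℝ) (ℓ : ℕ) : ℝ :=
  (traceFix K δ lam ℓ + Real.sqrt (traceFix K δ lam ℓ ^ 2 - 4 * detFix K δ ℓ)) / 2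

/-- `μ_u(ℓ)`, the unstable eigenvalue at `p_ℓ`. -/
noncomputable def muU (K δ lam : ℝ) (ℓ : ℕ) : ℝ :=
  (traceFix K δ lam ℓ - Real.sqrt (traceFix K δ lam ℓ ^ 2 - 4 * detFix K δ ℓ)) / 2

/-- `c_ℓ = cos x_ℓ`. -/
noncomputable def cosFix (K δ lam : ℝ) (ℓ : ℕ) : ℝ :=
  Real.sqrt (1 - ((yFix K ℓ - yFix K ℓ ^ δ) / lam) ^ 2)

/-- `M_ℓ`, the derivative of the model first-return map at the fixed point `p_ℓ`. -/
noncomputable def derivFix (K δ lam : ℝ) (ℓ : ℕ) : Matrix (Fin 2) (Fin 2) ℝ :=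
  !![1, -K / yFix K ℓ;
     lam * cosFix K δ lam ℓ,
       δ * yFix K ℓ ^ (δ - 1) - (lam * K / yFix K ℓ) * cosFix K δ lam ℓ]

lemma yFix_pos (K : ℝ) (ℓ : ℕ) : 0 < yFix K ℓ := Real.exp_pos _

lemma detFix_pos {K δ : ℝ} (hδ : 1 < δ) (ℓ : ℕ) : 0 < detFix K δ ℓ :=
  mul_pos (by linarith) (Real.exp_pos _)

lemma lam_cos (K δ : ℝ) {lam : ℝ} (hlam : 0 < lam) (ℓ : ℕ) :
    lam * cosFix K δ lam ℓ
      = Real.sqrt (lam ^ 2 - (yFix K ℓ - yFix K ℓ ^ δ) ^ 2) := by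
  unfold cosFix
  rw [show lam ^ 2 - (yFix K ℓ - yFix K ℓ ^ δ) ^ 2
        = lam ^ 2 * (1 - ((yFix K ℓ - yFix K ℓ ^ δ) / lam) ^ 2) by
      field_simp,
    Real.sqrt_mul (sq_nonneg lam), Real.sqrt_sq hlam.le]

lemma yFix_rpow (K δ' : ℝ) (ℓ : ℕ) :
    yFix K ℓ ^ δ' = Real.exp ((-(2 * Real.pi * (ℓ : ℝ)) / K) * δ') := by
  unfold yFix; rw [← Real.exp_mul]

lemma detFix_eq (K δ : ℝ) (ℓ : ℕ) : detFix K δ ℓ = δ * yFix K ℓ ^ (δ - 1) := by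
  unfold detFix
  rw [yFix_rpow]
  congr 1
  ring

lemma traceFix_eq (K δ : ℝ) {lam : ℝ} (hlam : 0 < lam) (ℓ : ℕ) :
    traceFix K δ lam ℓ =
      1 + δ * yFix K ℓ ^ (δ - 1) - (lam * K / yFix K ℓ) * cosFix K δ lam ℓ := by
  have h1 : Real.exp (2 * Real.pi * (ℓ : ℝ) / K) = (yFix K ℓ)⁻¹ := by
    unfold yFix
    rw [← Real.exp_neg]
    congr 1
    ring
  have h2 := lam_cos K δ hlam ℓ
  have h3 := detFix_eq K δ ℓ
  unfold traceFix
  unfold detFix at h3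
  rw [h3, h1, ← h2]
  ring

lemma eigvec_aux (K δ : ℝ) {lam : ℝ} (hK : 0 < K) (hlam : 0 < lam) (ℓ : ℕ) (μ : ℝ)
    (hμ : μ ^ 2 - traceFix K δ lam ℓ * μ + detFix K δ ℓ = 0) :
    ∃ v : Fin 2 → ℝ, v ≠ 0 ∧ (derivFix K δ lam ℓ).mulVec v = μ • v := by
  have hy := yFix_pos K ℓ
  have hb : -K / yFix K ℓ < 0 := div_neg_of_neg_of_pos (by linarith) hy
  refine ⟨![-K / yFix K ℓ, μ - 1], ?_, ?_⟩
  · intro h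
    have h0 : (-K / yFix K ℓ) = 0 := congrFun h 0
    exact hb.ne h0
  · have hT := traceFix_eq K δ hlam ℓ
    have hD := detFix_eq K δ ℓ
    rw [hT, hD] at hμ
    funext i
    fin_cases i <;>
      simp [derivFix, Matrix.mulVec, dotProduct, Fin.sum_univ_two]
    · ring
    · linear_combination -hμ

/-- for all large `ℓ`, `μ_s(ℓ)` and `μ_u(ℓ)` are the two real, distinct,
negative eigenvalues of `M_ℓ`, with the stated trace/determinant relations, and
`μ_s(ℓ) → 0⁻`, `μ_u(ℓ) → −∞`. -/
theorem eigenvalues_derivFix (K δ lam : ℝ) (hK : 0 < K) (hδ : 1 < δ) (hlam : 0 < lam) :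
    (∃ L : ℕ, ∀ ℓ ≥ L,
      yFix K ℓ - yFix K ℓ ^ δ < lam ∧
      0 < traceFix K δ lam ℓ ^ 2 - 4 * detFix K δ ℓ ∧
      (∃ v : Fin 2 → ℝ, v ≠ 0 ∧
        (derivFix K δ lam ℓ).mulVec v = muS K δ lam ℓ • v) ∧
      (∃ v : Fin 2 → ℝ, v ≠ 0 ∧
        (derivFix K δ lam ℓ).mulVec v = muU K δ lam ℓ • v) ∧
      muU K δ lam ℓ < muS K δ lam ℓ ∧ muS K δ lam ℓ < 0 ∧
      muS K δ lam ℓ + muU K δ lam ℓ = traceFix K δ lam ℓ ∧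
      muS K δ lam ℓ * muU K δ lam ℓ = detFix K δ ℓ) ∧
    Tendsto (muS K δ lam) atTop (𝓝 0) ∧
    Tendsto (muU K δ lam) atTop atBot := by
  have hpi : (0:ℝ) < 2 * Real.pi := by positivity
  -- y_ℓ → 0
  have hargt : Tendsto (fun ℓ : ℕ => -(2 * Real.pi * (ℓ : ℝ)) / K) atTop atBot := by
    have h1 : Tendsto (fun ℓ : ℕ => (-(2 * Real.pi) / K) * (ℓ : ℝ)) atTop atBot :=
      Tendsto.const_mul_atTop_of_neg
        (div_neg_of_neg_of_pos (neg_lt_zero.mpr hpi) hK) tendsto_natCast_atTop_atTop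
    exact h1.congr fun ℓ => by ring
  have hyt : Tendsto (fun ℓ : ℕ => yFix K ℓ) atTop (𝓝 0) :=
    Real.tendsto_exp_atBot.comp hargt
  -- y_ℓ^δ → 0
  have hydt : Tendsto (fun ℓ : ℕ => yFix K ℓ ^ δ) atTop (𝓝 0) := by
    have h1 : Tendsto (fun ℓ : ℕ => (-(2 * Real.pi * (ℓ : ℝ)) / K) * δ) atTop atBot :=
      hargt.atBot_mul_const (by linarith)
    have h2 := Real.tendsto_exp_atBot.comp h1
    exact h2.congr fun ℓ => (yFix_rpow K δ ℓ).symm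
  -- d_ℓ → 0
  have hdt : Tendsto (fun ℓ : ℕ => detFix K δ ℓ) atTop (𝓝 0) := by
    have h1 : Tendsto (fun ℓ : ℕ => (-(2 * Real.pi * (δ - 1)) / K) * (ℓ : ℝ)) atTop atBot :=
      Tendsto.const_mul_atTop_of_neg
        (div_neg_of_neg_of_pos (neg_lt_zero.mpr (mul_pos hpi (by linarith))) hK)
        tendsto_natCast_atTop_atTop
    have h2 : Tendsto (fun ℓ : ℕ => Real.exp (-(2 * Real.pi * (δ - 1) * (ℓ : ℝ)) / K))
        atTop (𝓝 0) :=
      Real.tendsto_exp_atBot.comp (h1.congr fun ℓ => by ring)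
    have := h2.const_mul δ
    simpa [detFix] using this
  -- √(λ² − (y−y^δ)²) → λ
  have hsqt : Tendsto (fun ℓ : ℕ =>
      Real.sqrt (lam ^ 2 - (yFix K ℓ - yFix K ℓ ^ δ) ^ 2)) atTop (𝓝 lam) := by
    have h1 : Tendsto (fun ℓ : ℕ => lam ^ 2 - (yFix K ℓ - yFix K ℓ ^ δ) ^ 2)
        atTop (𝓝 (lam ^ 2)) := by
      have h2 := (hyt.sub hydt).pow 2
      simpa using tendsto_const_nhds.sub h2
    have h3 := (Real.continuous_sqrt.tendsto (lam ^ 2)).comp h1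
    simpa [Function.comp_def, Real.sqrt_sq hlam.le] using h3
  -- K e^{2πℓ/K} √(…) → ∞
  have hKe : Tendsto (fun ℓ : ℕ => K * Real.exp (2 * Real.pi * (ℓ : ℝ) / K)) atTop atTop := by
    have h1 : Tendsto (fun ℓ : ℕ => (2 * Real.pi / K) * (ℓ : ℝ)) atTop atTop :=
      Tendsto.const_mul_atTop (by positivity) tendsto_natCast_atTop_atTop
    have h2 : Tendsto (fun ℓ : ℕ => Real.exp (2 * Real.pi * (ℓ : ℝ) / K)) atTop atTop :=
      Real.tendsto_exp_atTop.comp (h1.congr fun ℓ => by ring)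
    exact Tendsto.const_mul_atTop hK h2
  -- t_ℓ → −∞
  have htt : Tendsto (traceFix K δ lam) atTop atBot := by
    have h1 : Tendsto (fun ℓ : ℕ => K * Real.exp (2 * Real.pi * (ℓ : ℝ) / K) *
        Real.sqrt (lam ^ 2 - (yFix K ℓ - yFix K ℓ ^ δ) ^ 2)) atTop atTop :=
      hKe.atTop_mul_pos hlam hsqt
    have h2 : Tendsto (fun ℓ : ℕ => -(K * Real.exp (2 * Real.pi * (ℓ : ℝ) / K) *
        Real.sqrt (lam ^ 2 - (yFix K ℓ - yFix K ℓ ^ δ) ^ 2))) atTop atBot :=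
      tendsto_neg_atTop_atBot.comp h1
    have h3 : ∀ᶠ ℓ : ℕ in atTop, 1 + detFix K δ ℓ ≤ 2 := by
      filter_upwards [hdt.eventually_lt_const one_pos] with ℓ h
      linarith
    have h4 := tendsto_atBot_add_left_of_ge' (l := atTop) 2 h3 h2
    exact h4.congr fun ℓ => by unfold traceFix detFix; ring
  -- μ_u → −∞
  have hmuUt : Tendsto (muU K δ lam) atTop atBot := by
    have h1 : Tendsto (fun ℓ : ℕ => traceFix K δ lam ℓ / 2) atTop atBot :=
      htt.atBot_div_const two_pos
    refine tendsto_atBot_mono (fun ℓ => ?_) h1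
    have := Real.sqrt_nonneg (traceFix K δ lam ℓ ^ 2 - 4 * detFix K δ ℓ)
    unfold muU
    linarith
  -- eventual facts
  have hev1 : ∀ᶠ ℓ : ℕ in atTop, yFix K ℓ - yFix K ℓ ^ δ < lam := by
    have h0 : Tendsto (fun ℓ : ℕ => yFix K ℓ - yFix K ℓ ^ δ) atTop (𝓝 0) := by
      simpa using hyt.sub hydt
    exact h0.eventually_lt_const hlam
  have hev2 : ∀ᶠ ℓ : ℕ in atTop, traceFix K δ lam ℓ ≤ -2 := htt.eventually_le_atBot (-2)
  have hev3 : ∀ᶠ ℓ : ℕ in atTop, detFix K δ ℓ < 1 := hdt.eventually_lt_const one_pos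
  have hdisc : ∀ᶠ ℓ : ℕ in atTop, 0 < traceFix K δ lam ℓ ^ 2 - 4 * detFix K δ ℓ := by
    filter_upwards [hev2, hev3] with ℓ h2 h3
    nlinarith
  have hmain : ∀ᶠ ℓ : ℕ in atTop,
      yFix K ℓ - yFix K ℓ ^ δ < lam ∧
      0 < traceFix K δ lam ℓ ^ 2 - 4 * detFix K δ ℓ ∧
      (∃ v : Fin 2 → ℝ, v ≠ 0 ∧
        (derivFix K δ lam ℓ).mulVec v = muS K δ lam ℓ • v) ∧
      (∃ v : Fin 2 → ℝ, v ≠ 0 ∧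
        (derivFix K δ lam ℓ).mulVec v = muU K δ lam ℓ • v) ∧
      muU K δ lam ℓ < muS K δ lam ℓ ∧ muS K δ lam ℓ < 0 ∧
      muS K δ lam ℓ + muU K δ lam ℓ = traceFix K δ lam ℓ ∧
      muS K δ lam ℓ * muU K δ lam ℓ = detFix K δ ℓ := by
    filter_upwards [hev1, hev2, hdisc] with ℓ h1 h2 hd
    have hDpos : 0 < detFix K δ ℓ := detFix_pos hδ ℓ
    have hsq : Real.sqrt (traceFix K δ lam ℓ ^ 2 - 4 * detFix K δ ℓ) ^ 2
        = traceFix K δ lam ℓ ^ 2 - 4 * detFix K δ ℓ := Real.sq_sqrt hd.le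
    have hspos : 0 < Real.sqrt (traceFix K δ lam ℓ ^ 2 - 4 * detFix K δ ℓ) :=
      Real.sqrt_pos.mpr hd
    have hT0 : traceFix K δ lam ℓ < 0 := by linarith
    have hslt : Real.sqrt (traceFix K δ lam ℓ ^ 2 - 4 * detFix K δ ℓ)
        < -traceFix K δ lam ℓ := by
      rw [Real.sqrt_lt' (by linarith)]
      nlinarith
    have hqS : muS K δ lam ℓ ^ 2 - traceFix K δ lam ℓ * muS K δ lam ℓ + detFix K δ ℓ = 0 := by
      unfold muS
      linear_combination hsq / 4
    have hqU : muU K δ lam ℓ ^ 2 - traceFix K δ lam ℓ * muU K δ lam ℓ + detFix K δ ℓ = 0 := by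
      unfold muU
      linear_combination hsq / 4
    refine ⟨h1, hd, eigvec_aux K δ hK hlam ℓ _ hqS, eigvec_aux K δ hK hlam ℓ _ hqU,
      ?_, ?_, ?_, ?_⟩
    · unfold muS muU; linarith
    · unfold muS; linarith
    · unfold muS muU; ring
    · unfold muS muU; linear_combination -hsq / 4
  -- μ_s → 0
  have hmuSt : Tendsto (muS K δ lam) atTop (𝓝 0) := by
    have heq : ∀ᶠ ℓ : ℕ in atTop,
        -(detFix K δ ℓ / (-(muU K δ lam ℓ))) = muS K δ lam ℓ := by
      filter_upwards [hmain] with ℓ h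
      obtain ⟨_, _, _, _, hlt, hneg, _, hprod⟩ := h
      have hU : muU K δ lam ℓ < 0 := lt_trans hlt hneg
      rw [div_neg, neg_neg, eq_comm, eq_div_iff hU.ne]
      exact hprod
    have hneg : Tendsto (fun ℓ : ℕ => -(muU K δ lam ℓ)) atTop atTop :=
      tendsto_neg_atBot_atTop.comp hmuUt
    have h0 : Tendsto (fun ℓ : ℕ => -(detFix K δ ℓ / (-(muU K δ lam ℓ)))) atTop (𝓝 0) := by
      have := (hdt.div_atTop hneg).neg
      simpa using this
    exact h0.congr' heq
  rw [eventually_atTop] at hmain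
  obtain ⟨L, hL⟩ := hmain
  exact ⟨⟨L, hL⟩, hmuSt, hmuUt⟩
end

section
/- The unstable Lyapunov exponent of the 1-periodic orbit through p_ℓ converges to a positive limit: as ℓ → ∞, log|μ_u(ℓ)| / (2πℓ) → 1/K. -/
open Filter Topology Matrix

/-- the unstable Lyapunov exponent converges to `1/K > 0`. -/
theorem unstable_lyapunov_exponent (K δ lam : ℝ) (hK : 0 < K) (hδ : 1 < δ)
    (hlam : 0 < lam) :
    Tendsto (fun ℓ : ℕ => Real.log |muU K δ lam ℓ| / (2 * Real.pi * (ℓ : ℝ)))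
      atTop (𝓝 (1 / K)) := by
  have hπ := Real.pi_pos
  have hKl : 0 < K * lam := mul_pos hK hlam
  set s : ℕ → ℝ := fun ℓ => Real.exp (2 * Real.pi * (ℓ : ℝ) / K) with hs
  have hspos : ∀ ℓ, 0 < s ℓ := fun ℓ => Real.exp_pos _
  set g : ℕ → ℝ := fun ℓ =>
    ((traceFix K δ lam ℓ / s ℓ) -
      Real.sqrt ((traceFix K δ lam ℓ / s ℓ) ^ 2 - 4 * detFix K δ ℓ / (s ℓ) ^ 2)) / 2 with hg
  -- muU = s * g
  have hmu : ∀ ℓ, muU K δ lam ℓ = s ℓ * g ℓ := by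
    intro ℓ
    have hsne : s ℓ ≠ 0 := (hspos ℓ).ne'
    have h1 : (s ℓ) ^ 2 * ((traceFix K δ lam ℓ / s ℓ) ^ 2 - 4 * detFix K δ ℓ / (s ℓ) ^ 2)
        = traceFix K δ lam ℓ ^ 2 - 4 * detFix K δ ℓ := by
      field_simp
    have h2 : Real.sqrt (traceFix K δ lam ℓ ^ 2 - 4 * detFix K δ ℓ)
        = s ℓ * Real.sqrt ((traceFix K δ lam ℓ / s ℓ) ^ 2 - 4 * detFix K δ ℓ / (s ℓ) ^ 2) := by
      rw [← h1, Real.sqrt_mul (sq_nonneg _), Real.sqrt_sq (hspos ℓ).le]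
    rw [muU, hg, h2]
    field_simp
  -- basic limits
  have hnat : Tendsto (fun ℓ : ℕ => (ℓ : ℝ)) atTop atTop := tendsto_natCast_atTop_atTop
  have hlinBot : ∀ c : ℝ, 0 < c → Tendsto (fun ℓ : ℕ => -(c * (ℓ : ℝ)) / K) atTop atBot := by
    intro c hc
    have : Tendsto (fun ℓ : ℕ => (ℓ : ℝ) * (-(c / K))) atTop atBot :=
      hnat.atTop_mul_const_of_neg (by simpa using div_pos hc hK)
    refine this.congr fun ℓ => by ring
  have hy : Tendsto (fun ℓ : ℕ => yFix K ℓ) atTop (𝓝 0) := by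
    have := Real.tendsto_exp_atBot.comp (hlinBot (2 * Real.pi) (by positivity))
    exact this.congr fun ℓ => rfl
  have hyd : Tendsto (fun ℓ : ℕ => yFix K ℓ ^ δ) atTop (𝓝 0) := by
    have h1 : Tendsto (fun ℓ : ℕ => -(2 * Real.pi * (ℓ : ℝ)) / K * δ) atTop atBot := by
      have := (hlinBot (2 * Real.pi) (by positivity))
      exact this.atBot_mul_const (by positivity)
    have := Real.tendsto_exp_atBot.comp h1
    refine this.congr fun ℓ => ?_
    simp only [Function.comp]
    rw [yFix, Real.rpow_def_of_pos (Real.exp_pos _), Real.log_exp]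
  have hd : Tendsto (fun ℓ : ℕ => detFix K δ ℓ) atTop (𝓝 0) := by
    have h1 : Tendsto (fun ℓ : ℕ => -(2 * Real.pi * (δ - 1) * (ℓ : ℝ)) / K) atTop atBot := by
      have := hlinBot (2 * Real.pi * (δ - 1)) (by nlinarith)
      refine this.congr fun ℓ => by ring
    have := (Real.tendsto_exp_atBot.comp h1).const_mul δ
    simpa [detFix] using this
  have hsinv : Tendsto (fun ℓ : ℕ => (s ℓ)⁻¹) atTop (𝓝 0) := by
    refine Tendsto.inv_tendsto_atTop ?_
    exact Real.tendsto_exp_atTop.comp <| by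
      have : Tendsto (fun ℓ : ℕ => (ℓ : ℝ) * (2 * Real.pi / K)) atTop atTop :=
        hnat.atTop_mul_const (by positivity)
      exact this.congr fun ℓ => by ring
  -- sqrt term tends to lam
  have hsqrt : Tendsto (fun ℓ : ℕ => Real.sqrt (lam ^ 2 - (yFix K ℓ - yFix K ℓ ^ δ) ^ 2))
      atTop (𝓝 lam) := by
    have h1 : Tendsto (fun ℓ : ℕ => lam ^ 2 - (yFix K ℓ - yFix K ℓ ^ δ) ^ 2) atTop
        (𝓝 (lam ^ 2)) := by
      have h2 := (hy.sub hyd).pow 2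
      simpa using tendsto_const_nhds.sub h2
    have := (Real.continuous_sqrt.tendsto (lam ^ 2)).comp h1
    rwa [Real.sqrt_sq hlam.le] at this
  -- trace / s tends to -(K*lam)
  have hts : Tendsto (fun ℓ : ℕ => traceFix K δ lam ℓ / s ℓ) atTop (𝓝 (-(K * lam))) := by
    have heq : ∀ ℓ, traceFix K δ lam ℓ / s ℓ
        = (1 + detFix K δ ℓ) * (s ℓ)⁻¹
          - K * Real.sqrt (lam ^ 2 - (yFix K ℓ - yFix K ℓ ^ δ) ^ 2) := by
      intro ℓ
      have hsne : s ℓ ≠ 0 := (hspos ℓ).ne'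
      rw [traceFix, detFix]
      field_simp [hs]
      ring
    have h1 : Tendsto (fun ℓ : ℕ => (1 + detFix K δ ℓ) * (s ℓ)⁻¹
        - K * Real.sqrt (lam ^ 2 - (yFix K ℓ - yFix K ℓ ^ δ) ^ 2)) atTop
        (𝓝 ((1 + 0) * 0 - K * lam)) :=
      ((tendsto_const_nhds.add hd).mul hsinv).sub (hsqrt.const_mul K)
    have : ((1:ℝ) + 0) * 0 - K * lam = -(K * lam) := by ring
    rw [this] at h1
    exact Tendsto.congr (fun ℓ => (heq ℓ).symm) h1
  -- d / s^2 tends to 0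
  have hds2 : Tendsto (fun ℓ : ℕ => 4 * detFix K δ ℓ / (s ℓ) ^ 2) atTop (𝓝 0) := by
    have h1 : Tendsto (fun ℓ : ℕ => 4 * detFix K δ ℓ * ((s ℓ)⁻¹ * (s ℓ)⁻¹)) atTop
        (𝓝 (4 * 0 * (0 * 0))) := ((hd.const_mul 4).mul (hsinv.mul hsinv))
    simp only [mul_zero] at h1
    refine h1.congr fun ℓ => ?_
    rw [sq]; field_simp
  -- g tends to -(K*lam)
  have hgl : Tendsto g atTop (𝓝 (-(K * lam))) := by
    have hinner : Tendsto (fun ℓ : ℕ => (traceFix K δ lam ℓ / s ℓ) ^ 2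
        - 4 * detFix K δ ℓ / (s ℓ) ^ 2) atTop (𝓝 ((K * lam) ^ 2)) := by
      have := (hts.pow 2).sub hds2
      simpa [neg_pow] using this
    have hsq : Tendsto (fun ℓ : ℕ => Real.sqrt ((traceFix K δ lam ℓ / s ℓ) ^ 2
        - 4 * detFix K δ ℓ / (s ℓ) ^ 2)) atTop (𝓝 (K * lam)) := by
      have := (Real.continuous_sqrt.tendsto ((K * lam) ^ 2)).comp hinner
      rwa [Real.sqrt_sq hKl.le] at this
    have := (hts.sub hsq).div_const 2
    have heq : (-(K * lam) - K * lam) / 2 = -(K * lam) := by ring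
    rwa [heq] at this
  have habs : Tendsto (fun ℓ => |g ℓ|) atTop (𝓝 (K * lam)) := by
    have := hgl.abs
    rwa [abs_neg, abs_of_pos hKl] at this
  have hlog : Tendsto (fun ℓ => Real.log |g ℓ|) atTop (𝓝 (Real.log (K * lam))) :=
    (Real.continuousAt_log hKl.ne').tendsto.comp habs
  -- eventual equality
  have hev : ∀ᶠ ℓ : ℕ in atTop,
      Real.log |muU K δ lam ℓ| / (2 * Real.pi * (ℓ : ℝ))
        = 1 / K + Real.log |g ℓ| / (2 * Real.pi * (ℓ : ℝ)) := by
    have hgpos : ∀ᶠ ℓ : ℕ in atTop, 0 < |g ℓ| := habs.eventually (eventually_gt_nhds hKl)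
    filter_upwards [hgpos, eventually_ge_atTop 1] with ℓ hgℓ hℓ
    have hℓpos : (0:ℝ) < (ℓ : ℝ) := by exact_mod_cast hℓ
    have hsne : s ℓ ≠ 0 := (hspos ℓ).ne'
    rw [hmu ℓ, abs_mul, abs_of_pos (hspos ℓ), Real.log_mul hsne (by positivity),
      hs, Real.log_exp]
    have h2πℓ : 2 * Real.pi * (ℓ : ℝ) ≠ 0 := by positivity
    rw [add_div, div_right_comm, div_self h2πℓ]
  refine Tendsto.congr' (hev.mono fun ℓ h => h.symm) ?_
  have hz : Tendsto (fun ℓ : ℕ => Real.log |g ℓ| / (2 * Real.pi * (ℓ : ℝ))) atTop (𝓝 0) := by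
    have h0 : Tendsto (fun ℓ : ℕ => (ℓ : ℝ) * (2 * Real.pi)) atTop atTop :=
      hnat.atTop_mul_const (by positivity)
    have h1 : Tendsto (fun ℓ : ℕ => (2 * Real.pi * (ℓ : ℝ))⁻¹) atTop (𝓝 0) :=
      h0.inv_tendsto_atTop.congr fun ℓ => by simp [mul_comm]
    have := hlog.mul h1
    simpa [div_eq_mul_inv] using this
  have h := (tendsto_const_nhds : Tendsto (fun _ : ℕ => 1 / K) atTop (𝓝 (1 / K))).add hz
  rw [add_zero] at h
  exact h
end

section
/- The stable Lyapunov exponent of the 1-periodic orbit through p_ℓ converges to a negative limit: as ℓ → ∞, log|μ_s(ℓ)| / (2πℓ) → −δ/K. In particular, both limiting Lyapunov exponents 1/K and −δ/K are nonzero, so the Lyapunov exponents at the 1-periodic orbits are uniformly bounded away from zero for large ℓ. -/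
open Filter Topology Matrix

set_option maxHeartbeats 1000000

/-- the stable Lyapunov exponent converges to `−δ/K < 0`; in particular
both limiting Lyapunov exponents are nonzero and the Lyapunov exponents at the
1-periodic orbits are uniformly bounded away from zero for large `ℓ`. -/
theorem stable_lyapunov_exponent (K δ lam : ℝ) (hK : 0 < K) (hδ : 1 < δ)
    (hlam : 0 < lam) :
    Tendsto (fun ℓ : ℕ => Real.log |muS K δ lam ℓ| / (2 * Real.pi * (ℓ : ℝ)))
      atTop (𝓝 (-δ / K)) ∧
    (1 / K ≠ 0) ∧ (-δ / K ≠ 0) ∧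
    ∃ c > 0, ∀ᶠ ℓ : ℕ in atTop,
      c ≤ |Real.log |muS K δ lam ℓ| / (2 * Real.pi * (ℓ : ℝ))| ∧
      c ≤ |Real.log |muU K δ lam ℓ| / (2 * Real.pi * (ℓ : ℝ))| := by
  have hπ := Real.pi_pos
  have hKL : (0:ℝ) < K * lam := mul_pos hK hlam
  set a : ℕ → ℝ := fun ℓ => 2 * Real.pi * (ℓ : ℝ) / K with ha_def
  have ha_top : Tendsto a atTop atTop :=
    Tendsto.atTop_div_const hK
      (Tendsto.const_mul_atTop (by positivity) tendsto_natCast_atTop_atTop)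
  have hy : ∀ ℓ, yFix K ℓ = Real.exp (-(a ℓ)) := by
    intro ℓ; simp only [yFix, ha_def, neg_div]
  have harg : ∀ ℓ : ℕ, -(2 * Real.pi * (δ - 1) * (ℓ : ℝ)) / K = -((δ - 1) * a ℓ) := by
    intro ℓ; rw [ha_def]; field_simp
  have hd_eq : ∀ ℓ, detFix K δ ℓ = δ * Real.exp (-((δ - 1) * a ℓ)) := by
    intro ℓ; rw [detFix, harg ℓ]
  -- f and s
  set f : ℕ → ℝ := fun ℓ => yFix K ℓ - yFix K ℓ ^ δ with hf_def
  set s : ℕ → ℝ := fun ℓ => Real.sqrt (lam ^ 2 - f ℓ ^ 2) with hs_def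
  have hy_pos : ∀ ℓ, 0 < yFix K ℓ := fun ℓ => Real.exp_pos _
  have hypow : ∀ ℓ, yFix K ℓ ^ δ = Real.exp (-(δ * a ℓ)) := by
    intro ℓ
    rw [hy, ← Real.exp_one_rpow (-(a ℓ)), ← Real.rpow_mul (Real.exp_pos 1).le,
      Real.exp_one_rpow]
    ring_nf
  have hf0 : Tendsto f atTop (𝓝 0) := by
    have h1 : Tendsto (fun ℓ => Real.exp (-(a ℓ))) atTop (𝓝 0) :=
      Real.tendsto_exp_atBot.comp (tendsto_neg_atTop_atBot.comp ha_top)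
    have h2 : Tendsto (fun ℓ => Real.exp (-(δ * a ℓ))) atTop (𝓝 0) := by
      apply Real.tendsto_exp_atBot.comp
      apply tendsto_neg_atTop_atBot.comp
      exact Tendsto.const_mul_atTop (by linarith) ha_top
    have := h1.sub h2
    simp only [sub_zero] at this
    refine this.congr fun ℓ => ?_
    show Real.exp (-(a ℓ)) - Real.exp (-(δ * a ℓ)) = yFix K ℓ - yFix K ℓ ^ δ
    rw [hypow, hy]
  have hs_lim : Tendsto s atTop (𝓝 lam) := by
    have h1 : Tendsto (fun ℓ => lam ^ 2 - f ℓ ^ 2) atTop (𝓝 (lam ^ 2)) := by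
      have := (hf0.pow 2)
      simpa using (tendsto_const_nhds (x := lam ^ 2)).sub this
    have h2 := (Real.continuous_sqrt.tendsto (lam ^ 2)).comp h1
    rwa [Real.sqrt_sq hlam.le] at h2
  -- T = -trace
  set T : ℕ → ℝ := fun ℓ => -(traceFix K δ lam ℓ) with hT_def
  have hTid : ∀ ℓ, Real.exp (-(a ℓ)) * T ℓ
      = K * s ℓ - Real.exp (-(a ℓ)) - δ * Real.exp (-(δ * a ℓ)) := by
    intro ℓ
    have e1 : Real.exp (-(a ℓ)) * Real.exp (a ℓ) = 1 := by
      rw [← Real.exp_add]; simp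
    have e2 : Real.exp (-(a ℓ)) * Real.exp (-((δ - 1) * a ℓ)) = Real.exp (-(δ * a ℓ)) := by
      rw [← Real.exp_add]; ring_nf
    have ht : traceFix K δ lam ℓ
        = 1 + δ * Real.exp (-((δ - 1) * a ℓ)) - K * Real.exp (a ℓ) * s ℓ := by
      rw [traceFix, harg ℓ]
    simp only [hT_def]
    calc Real.exp (-(a ℓ)) * -(traceFix K δ lam ℓ)
        = Real.exp (-(a ℓ)) *
            -(1 + δ * Real.exp (-((δ - 1) * a ℓ)) - K * Real.exp (a ℓ) * s ℓ) := by rw [ht]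
      _ = K * s ℓ * (Real.exp (-(a ℓ)) * Real.exp (a ℓ)) - Real.exp (-(a ℓ))
          - δ * (Real.exp (-(a ℓ)) * Real.exp (-((δ - 1) * a ℓ))) := by ring
      _ = K * s ℓ - Real.exp (-(a ℓ)) - δ * Real.exp (-(δ * a ℓ)) := by
          rw [e1, e2]; ring
  have hexp1 : Tendsto (fun ℓ => Real.exp (-(a ℓ))) atTop (𝓝 0) :=
    Real.tendsto_exp_atBot.comp (tendsto_neg_atTop_atBot.comp ha_top)
  have hexp2 : Tendsto (fun ℓ => Real.exp (-(δ * a ℓ))) atTop (𝓝 0) := by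
    apply Real.tendsto_exp_atBot.comp
    apply tendsto_neg_atTop_atBot.comp
    exact Tendsto.const_mul_atTop (by linarith) ha_top
  have hTlim : Tendsto (fun ℓ => Real.exp (-(a ℓ)) * T ℓ) atTop (𝓝 (K * lam)) := by
    have : Tendsto (fun ℓ => K * s ℓ - Real.exp (-(a ℓ)) - δ * Real.exp (-(δ * a ℓ)))
        atTop (𝓝 (K * lam - 0 - δ * 0)) :=
      ((hs_lim.const_mul K).sub hexp1).sub (hexp2.const_mul δ)
    simp only [mul_zero, sub_zero] at this
    exact this.congr fun ℓ => (hTid ℓ).symm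
  -- det limit
  have hd_pos : ∀ ℓ, 0 < detFix K δ ℓ := by
    intro ℓ; rw [hd_eq]; positivity
  have hd0 : Tendsto (fun ℓ => detFix K δ ℓ) atTop (𝓝 0) := by
    have h2 : Tendsto (fun ℓ => Real.exp (-((δ - 1) * a ℓ))) atTop (𝓝 0) := by
      apply Real.tendsto_exp_atBot.comp
      apply tendsto_neg_atTop_atBot.comp
      exact Tendsto.const_mul_atTop (by linarith) ha_top
    have := h2.const_mul δ
    simp only [mul_zero] at this
    exact this.congr fun ℓ => (hd_eq ℓ).symm
  -- eventual bounds package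
  have hev_lo : ∀ᶠ ℓ in atTop, K * lam / 2 ≤ Real.exp (-(a ℓ)) * T ℓ :=
    hTlim.eventually (eventually_ge_nhds (by linarith))
  have hev_hi : ∀ᶠ ℓ in atTop, Real.exp (-(a ℓ)) * T ℓ ≤ 2 * (K * lam) :=
    hTlim.eventually (eventually_le_nhds (by linarith))
  have hev_a : ∀ᶠ ℓ in atTop, (1:ℝ) ≤ a ℓ := ha_top.eventually_ge_atTop 1
  have hev_d : ∀ᶠ ℓ in atTop, detFix K δ ℓ ≤ (K * lam) ^ 2 / 32 :=
    hd0.eventually (eventually_le_nhds (by positivity))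
  have hev_n : ∀ᶠ ℓ : ℕ in atTop, 1 ≤ ℓ := eventually_ge_atTop 1
  -- the main eventual facts about muU
  have hmain : ∀ᶠ ℓ in atTop,
      (K * lam / 4) * Real.exp (a ℓ) ≤ |muU K δ lam ℓ| ∧
      |muU K δ lam ℓ| ≤ 2 * (K * lam) * Real.exp (a ℓ) ∧
      muS K δ lam ℓ * muU K δ lam ℓ = detFix K δ ℓ := by
    filter_upwards [hev_lo, hev_hi, hev_a, hev_d] with ℓ hlo hhi ha1 hd32
    have hea : (0:ℝ) < Real.exp (a ℓ) := Real.exp_pos _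
    have hene : Real.exp (-(a ℓ)) * Real.exp (a ℓ) = 1 := by
      rw [← Real.exp_add]; simp
    have hT_lo : K * lam / 2 * Real.exp (a ℓ) ≤ T ℓ := by
      have h := mul_le_mul_of_nonneg_right hlo hea.le
      rw [mul_right_comm, hene, one_mul] at h
      exact h
    have hT_hi : T ℓ ≤ 2 * (K * lam) * Real.exp (a ℓ) := by
      have h := mul_le_mul_of_nonneg_right hhi hea.le
      rw [mul_right_comm, hene, one_mul] at h
      exact h
    have hea1 : (1:ℝ) ≤ Real.exp (a ℓ) := by
      rw [show (1:ℝ) = Real.exp 0 by simp]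
      exact Real.exp_le_exp.mpr (by linarith)
    have hT_pos : 0 < T ℓ := lt_of_lt_of_le (by positivity) hT_lo
    have hTsq : (K * lam) ^ 2 / 4 ≤ T ℓ ^ 2 := by
      have h1 : K * lam / 2 ≤ T ℓ := le_trans (by nlinarith) hT_lo
      nlinarith
    have hdisc : (K * lam) ^ 2 / 8 ≤ traceFix K δ lam ℓ ^ 2 - 4 * detFix K δ ℓ := by
      have : traceFix K δ lam ℓ ^ 2 = T ℓ ^ 2 := by simp only [hT_def]; ring
      rw [this]; nlinarith
    have hdisc0 : 0 ≤ traceFix K δ lam ℓ ^ 2 - 4 * detFix K δ ℓ := by nlinarith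
    set r : ℝ := Real.sqrt (traceFix K δ lam ℓ ^ 2 - 4 * detFix K δ ℓ) with hr_def
    have hr0 : 0 ≤ r := Real.sqrt_nonneg _
    have hr_sq : r ^ 2 = traceFix K δ lam ℓ ^ 2 - 4 * detFix K δ ℓ := Real.sq_sqrt hdisc0
    have hrT : r ≤ T ℓ := by
      have : r ^ 2 ≤ T ℓ ^ 2 := by
        rw [hr_sq]; simp only [hT_def]; nlinarith [(hd_pos ℓ)]
      nlinarith
    have ht_neg : traceFix K δ lam ℓ = -T ℓ := by simp only [hT_def]; ring
    have hmuU : muU K δ lam ℓ = -((T ℓ + r) / 2) := by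
      rw [muU, ← hr_def, ht_neg]; ring
    have habs : |muU K δ lam ℓ| = (T ℓ + r) / 2 := by
      rw [hmuU, abs_neg, abs_of_nonneg (by linarith)]
    refine ⟨?_, ?_, ?_⟩
    · rw [habs]; linarith
    · rw [habs]; linarith
    · rw [muS, muU, ← hr_def]
      have : (traceFix K δ lam ℓ + r) / 2 * ((traceFix K δ lam ℓ - r) / 2)
          = (traceFix K δ lam ℓ ^ 2 - r ^ 2) / 4 := by ring
      rw [this, hr_sq]; ring
  -- log|muU|/(2πℓ) → 1/K
  have h2πℓ : ∀ ℓ : ℕ, 1 ≤ ℓ → (0:ℝ) < 2 * Real.pi * ℓ := by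
    intro ℓ hℓ
    have : (1:ℝ) ≤ (ℓ:ℝ) := by exact_mod_cast hℓ
    nlinarith
  have ha_div : ∀ ℓ : ℕ, 1 ≤ ℓ → a ℓ / (2 * Real.pi * ℓ) = 1 / K := by
    intro ℓ hℓ
    have h := h2πℓ ℓ hℓ
    rw [ha_def]
    show 2 * Real.pi * (ℓ:ℝ) / K / (2 * Real.pi * (ℓ:ℝ)) = 1 / K
    rw [div_div, mul_comm K, ← div_div, div_self h.ne']
  have hzero : ∀ C : ℝ, Tendsto (fun ℓ : ℕ => C / (2 * Real.pi * ℓ)) atTop (𝓝 0) := by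
    intro C
    have := tendsto_const_div_atTop_nhds_zero_nat (C / (2 * Real.pi))
    refine this.congr fun ℓ => ?_
    rw [div_div]
  have hlogU : Tendsto (fun ℓ : ℕ => Real.log |muU K δ lam ℓ| / (2 * Real.pi * ℓ))
      atTop (𝓝 (1 / K)) := by
    have hg : Tendsto (fun ℓ : ℕ => Real.log (K * lam / 4) / (2 * Real.pi * ℓ) + 1 / K)
        atTop (𝓝 (1 / K)) := by
      have := (hzero (Real.log (K * lam / 4))).add (tendsto_const_nhds (x := 1 / K))
      rwa [zero_add] at this
    have hh : Tendsto (fun ℓ : ℕ => Real.log (2 * (K * lam)) / (2 * Real.pi * ℓ) + 1 / K)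
        atTop (𝓝 (1 / K)) := by
      have := (hzero (Real.log (2 * (K * lam)))).add (tendsto_const_nhds (x := 1 / K))
      rwa [zero_add] at this
    refine tendsto_of_tendsto_of_tendsto_of_le_of_le' hg hh ?_ ?_
    · filter_upwards [hmain, hev_n] with ℓ hm hℓ
      have hp := h2πℓ ℓ hℓ
      have h1 : Real.log (K * lam / 4) + a ℓ ≤ Real.log |muU K δ lam ℓ| := by
        have hb : (0:ℝ) < K * lam / 4 * Real.exp (a ℓ) := by positivity
        calc Real.log (K * lam / 4) + a ℓ
            = Real.log (K * lam / 4 * Real.exp (a ℓ)) := by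
              rw [Real.log_mul (by positivity) (Real.exp_ne_zero _), Real.log_exp]
          _ ≤ Real.log |muU K δ lam ℓ| := Real.log_le_log hb hm.1
      calc Real.log (K * lam / 4) / (2 * Real.pi * ℓ) + 1 / K
          = (Real.log (K * lam / 4) + a ℓ) / (2 * Real.pi * ℓ) := by
            rw [add_div, ha_div ℓ hℓ]
        _ ≤ Real.log |muU K δ lam ℓ| / (2 * Real.pi * ℓ) := by gcongr
    · filter_upwards [hmain, hev_n] with ℓ hm hℓ
      have hp := h2πℓ ℓ hℓ
      have h1 : Real.log |muU K δ lam ℓ| ≤ Real.log (2 * (K * lam)) + a ℓ := by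
        have hb : (0:ℝ) < |muU K δ lam ℓ| :=
          lt_of_lt_of_le (by positivity) hm.1
        calc Real.log |muU K δ lam ℓ|
            ≤ Real.log (2 * (K * lam) * Real.exp (a ℓ)) := Real.log_le_log hb hm.2.1
          _ = Real.log (2 * (K * lam)) + a ℓ := by
              rw [Real.log_mul (by positivity) (Real.exp_ne_zero _), Real.log_exp]
      calc Real.log |muU K δ lam ℓ| / (2 * Real.pi * ℓ)
          ≤ (Real.log (2 * (K * lam)) + a ℓ) / (2 * Real.pi * ℓ) := by gcongr
        _ = Real.log (2 * (K * lam)) / (2 * Real.pi * ℓ) + 1 / K := by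
            rw [add_div, ha_div ℓ hℓ]
  -- log(det)/(2πℓ) → -(δ-1)/K
  have hlogd : Tendsto (fun ℓ : ℕ => Real.log (detFix K δ ℓ) / (2 * Real.pi * ℓ))
      atTop (𝓝 (-((δ - 1) / K))) := by
    have heq : ∀ᶠ ℓ : ℕ in atTop, Real.log δ / (2 * Real.pi * ℓ) - (δ - 1) / K
        = Real.log (detFix K δ ℓ) / (2 * Real.pi * ℓ) := by
      filter_upwards [hev_n] with ℓ hℓ
      have hp := h2πℓ ℓ hℓ
      have hlog : Real.log (detFix K δ ℓ) = Real.log δ - (δ - 1) * a ℓ := by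
        rw [hd_eq, Real.log_mul (by linarith) (Real.exp_ne_zero _), Real.log_exp]
        ring
      rw [hlog, sub_div (Real.log δ) ((δ - 1) * a ℓ) (2 * Real.pi * (ℓ:ℝ))]
      have hx : (δ - 1) * a ℓ / (2 * Real.pi * ℓ) = (δ - 1) / K := by
        rw [mul_div_assoc, ha_div ℓ hℓ, mul_one_div]
      rw [hx]
    have h1 : Tendsto (fun ℓ : ℕ => Real.log δ / (2 * Real.pi * ℓ) - (δ - 1) / K)
        atTop (𝓝 (0 - (δ - 1) / K)) :=
      (hzero (Real.log δ)).sub tendsto_const_nhds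
    rw [show (0:ℝ) - (δ - 1) / K = -((δ - 1) / K) by ring] at h1
    exact Tendsto.congr' heq h1
  -- log|muS|
  have heqS : ∀ᶠ ℓ : ℕ in atTop,
      Real.log (detFix K δ ℓ) / (2 * Real.pi * ℓ)
        - Real.log |muU K δ lam ℓ| / (2 * Real.pi * ℓ)
      = Real.log |muS K δ lam ℓ| / (2 * Real.pi * ℓ) := by
    filter_upwards [hmain] with ℓ hm
    have hU_pos : (0:ℝ) < |muU K δ lam ℓ| := lt_of_lt_of_le (by positivity) hm.1
    have hprod : |muS K δ lam ℓ| * |muU K δ lam ℓ| = detFix K δ ℓ := by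
      rw [← abs_mul, hm.2.2, abs_of_pos (hd_pos ℓ)]
    have hS_ne : |muS K δ lam ℓ| ≠ 0 := by
      intro h0
      rw [h0, zero_mul] at hprod
      exact (hd_pos ℓ).ne' hprod.symm
    have hlog : Real.log (detFix K δ ℓ)
        = Real.log |muS K δ lam ℓ| + Real.log |muU K δ lam ℓ| := by
      rw [← hprod, Real.log_mul hS_ne hU_pos.ne']
    rw [hlog, add_div]
    ring
  have hlogS : Tendsto (fun ℓ : ℕ => Real.log |muS K δ lam ℓ| / (2 * Real.pi * ℓ))
      atTop (𝓝 (-δ / K)) := by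
    have h1 := hlogd.sub hlogU
    rw [show -((δ - 1) / K) - 1 / K = -δ / K by ring] at h1
    exact Tendsto.congr' heqS h1
  refine ⟨hlogS, one_div_ne_zero hK.ne', ?_, ?_⟩
  · simp only [ne_eq, div_eq_zero_iff, neg_eq_zero, not_or]
    constructor <;> [linarith; exact hK.ne']
  · have hmin : 0 < min (δ / K) (1 / K) / 2 := by
      have h1 : (0:ℝ) < δ / K := div_pos (by linarith) hK
      have h2 : (0:ℝ) < 1 / K := by positivity
      have := lt_min h1 h2
      linarith
    refine ⟨min (δ / K) (1 / K) / 2, hmin, ?_⟩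
    have hS_abs : Tendsto (fun ℓ : ℕ => |Real.log |muS K δ lam ℓ| / (2 * Real.pi * ℓ)|)
        atTop (𝓝 (δ / K)) := by
      have := hlogS.abs
      have habs : |-δ / K| = δ / K := by
        rw [abs_div, abs_neg, abs_of_pos (show (0:ℝ) < δ by linarith), abs_of_pos hK]
      rwa [habs] at this
    have hU_abs : Tendsto (fun ℓ : ℕ => |Real.log |muU K δ lam ℓ| / (2 * Real.pi * ℓ)|)
        atTop (𝓝 (1 / K)) := by
      have := hlogU.abs
      have habs : |(1:ℝ) / K| = 1 / K := abs_of_pos (by positivity)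
      rwa [habs] at this
    have hc1 : min (δ / K) (1 / K) / 2 < δ / K := by
      have h1 : min (δ / K) (1 / K) ≤ δ / K := min_le_left _ _
      have h2 : (0:ℝ) < δ / K := by positivity
      linarith
    have hc2 : min (δ / K) (1 / K) / 2 < 1 / K := by
      have h1 : min (δ / K) (1 / K) ≤ 1 / K := min_le_right _ _
      have h2 : (0:ℝ) < 1 / K := by positivity
      linarith
    filter_upwards [hS_abs.eventually (eventually_ge_nhds hc1),
      hU_abs.eventually (eventually_ge_nhds hc2)] with ℓ h1 h2
    exact ⟨h1, h2⟩
end
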